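/- With the setup of a device holding subsets T_1^(z),…,T_k^(z) of the global clusters with at most k' nonempty, the local data-minus-local-means matrix satisfies ‖A^(z) − C^(z)‖_op ≤ (1 + √k')·‖A − C‖_op ≤ 2√k'·‖A − C‖_op, provided k' ≥ 1. -/

import Mathlib

open Matrix
open scoped Matrix.Norms.L2Operator

/-- The ℓ2 (spectral) operator norm of a matrix. -/
noncomputable def opNorm {n d : ℕ} (M : Matrix (Fin n) (Fin d) ℝ) : ℝ :=
  ‖LinearMap.toContinuousLinearMap (Matrix.toEuclideanLin M)‖

/-- Mean of the rows of `A` indexed by `S`, as a point of Euclidean space. -/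
noncomputable def clMean {n d : ℕ} (A : Matrix (Fin n) (Fin d) ℝ) (S : Finset (Fin n)) :
    EuclideanSpace ℝ (Fin d) :=
  (S.card : ℝ)⁻¹ • ∑ i ∈ S, (WithLp.equiv 2 (Fin d → ℝ)).symm (A i)

/-- The cluster (as a `Finset`) of label `r` under the cluster assignment `c`. -/
def cluster {n k : ℕ} (c : Fin n → Fin k) (r : Fin k) : Finset (Fin n) :=
  Finset.univ.filter (fun j => c j = r)

/-- Local cluster on a device whose rows are selected by the embedding `e`. -/
def localCluster {n m k : ℕ} (c : Fin n → Fin k) (e : Fin m ↪ Fin n) (r : Fin k) :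
    Finset (Fin m) :=
  Finset.univ.filter (fun i => c (e i) = r)

lemma opNorm_eq_norm {n d : ℕ} (M : Matrix (Fin n) (Fin d) ℝ) : opNorm M = ‖M‖ := rfl

lemma euclid_norm_eq {d : ℕ} (v : Fin d → ℝ) :
    ‖(WithLp.equiv 2 (Fin d → ℝ)).symm v‖ = Real.sqrt (∑ j, v j ^ 2) := by
  rw [EuclideanSpace.norm_eq]
  simp [Real.norm_eq_abs, sq_abs]

lemma mulVec_norm_le {n d : ℕ} (M : Matrix (Fin n) (Fin d) ℝ) (v : Fin d → ℝ) :
    Real.sqrt (∑ i, (M *ᵥ v) i ^ 2) ≤ ‖M‖ * Real.sqrt (∑ j, v j ^ 2) := by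
  have h := M.l2_opNorm_mulVec ((WithLp.equiv 2 (Fin d → ℝ)).symm v)
  rw [show ((WithLp.equiv 2 (Fin d → ℝ)).symm v : Fin d → ℝ) = v from rfl] at h
  rw [← euclid_norm_eq, ← euclid_norm_eq]
  exact h

lemma opNorm_le_of_mulVec {n d : ℕ} (M : Matrix (Fin n) (Fin d) ℝ) (c : ℝ) (hc : 0 ≤ c)
    (h : ∀ v : Fin d → ℝ,
      Real.sqrt (∑ i, (M *ᵥ v) i ^ 2) ≤ c * Real.sqrt (∑ j, v j ^ 2)) :
    ‖M‖ ≤ c := by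
  have key : ∀ x : EuclideanSpace ℝ (Fin d),
      ‖LinearMap.toContinuousLinearMap (Matrix.toEuclideanLin M) x‖ ≤ c * ‖x‖ := by
    intro x
    have hx : LinearMap.toContinuousLinearMap (Matrix.toEuclideanLin M) x
        = (WithLp.equiv 2 (Fin n → ℝ)).symm (M *ᵥ (WithLp.equiv 2 (Fin d → ℝ)) x) := rfl
    rw [hx, euclid_norm_eq]
    have hxn : ‖x‖ = Real.sqrt (∑ j, ((WithLp.equiv 2 (Fin d → ℝ)) x) j ^ 2) := by
      rw [← euclid_norm_eq]; rfl
    rw [hxn]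
    exact h _
  exact ContinuousLinearMap.opNorm_le_bound _ hc key

lemma opNorm_transpose {n d : ℕ} (M : Matrix (Fin n) (Fin d) ℝ) : ‖Mᵀ‖ = ‖M‖ := by
  rw [← Matrix.l2_opNorm_conjTranspose M]
  congr 1

lemma opNorm_submatrix_le {n m d : ℕ} (M : Matrix (Fin n) (Fin d) ℝ) (e : Fin m ↪ Fin n) :
    ‖M.submatrix ⇑e id‖ ≤ ‖M‖ := by
  refine opNorm_le_of_mulVec _ _ (norm_nonneg M) fun v => ?_
  refine le_trans ?_ (mulVec_norm_le M v)
  apply Real.sqrt_le_sqrt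
  have hrw : ∀ i, (M.submatrix ⇑e id *ᵥ v) i = (M *ᵥ v) (e i) := fun i => rfl
  simp only [hrw]
  calc ∑ i, (M *ᵥ v) (e i) ^ 2
      = ∑ j ∈ Finset.univ.map e, (M *ᵥ v) j ^ 2 :=
        (Finset.sum_map Finset.univ e (fun j => (M *ᵥ v) j ^ 2)).symm
    _ ≤ ∑ j, (M *ᵥ v) j ^ 2 :=
        Finset.sum_le_sum_of_subset_of_nonneg (Finset.subset_univ _)
          (fun j _ _ => sq_nonneg _)

lemma opNorm_le_frobenius {m d : ℕ} (M : Matrix (Fin m) (Fin d) ℝ) :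
    ‖M‖ ≤ Real.sqrt (∑ i, ∑ j, M i j ^ 2) := by
  refine opNorm_le_of_mulVec _ _ (Real.sqrt_nonneg _) fun v => ?_
  rw [← Real.sqrt_mul (by positivity)]
  apply Real.sqrt_le_sqrt
  rw [Finset.sum_mul]
  refine Finset.sum_le_sum fun i _ => ?_
  have hmv : (M *ᵥ v) i = ∑ j, M i j * v j := rfl
  rw [hmv]
  exact Finset.sum_mul_sq_le_sq_mul_sq (R := ℝ) Finset.univ (fun j => M i j) v

/-- per-cluster mean deviation bound -/
lemma mean_diff_bound {n m d k : ℕ} (A C : Matrix (Fin n) (Fin d) ℝ)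
    (c : Fin n → Fin k) (e : Fin m ↪ Fin n) (r : Fin k)
    (hC : ∀ i, (WithLp.equiv 2 (Fin d → ℝ)).symm (C i) = clMean A (cluster c (c i)))
    (hS : (localCluster c e r).Nonempty) :
    ((localCluster c e r).card : ℝ) *
      ‖clMean A (cluster c r) - clMean (A.submatrix ⇑e id) (localCluster c e r)‖ ^ 2
      ≤ ‖A - C‖ ^ 2 := by
  classical
  set S := localCluster c e r with hSdef
  have hcard : 0 < (S.card : ℝ) := by exact_mod_cast Finset.card_pos.2 hS
  -- global mean equals C's row for members
  have hmem : ∀ i ∈ S, c (e i) = r := fun i hi => by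
    simpa [hSdef, localCluster] using hi
  have hglob : clMean A (cluster c r)
      = (S.card : ℝ)⁻¹ • ∑ i ∈ S, (WithLp.equiv 2 (Fin d → ℝ)).symm (C (e i)) := by
    have : ∀ i ∈ S, (WithLp.equiv 2 (Fin d → ℝ)).symm (C (e i)) = clMean A (cluster c r) :=
      fun i hi => by rw [hC (e i), hmem i hi]
    rw [Finset.sum_congr rfl this, Finset.sum_const, ← Nat.cast_smul_eq_nsmul ℝ, smul_smul,
      inv_mul_cancel₀ hcard.ne', one_smul]
  -- the difference as a transpose mulVec
  set u : Fin n → ℝ := fun j => if j ∈ S.map e then 1 else 0 with hu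
  have hdiff : clMean A (cluster c r) - clMean (A.submatrix ⇑e id) S
      = (S.card : ℝ)⁻¹ • (WithLp.equiv 2 (Fin d → ℝ)).symm ((C - A)ᵀ *ᵥ u) := by
    rw [hglob, clMean, ← smul_sub, ← Finset.sum_sub_distrib]
    congr 1
    have hterm : ∀ i ∈ S,
        (WithLp.equiv 2 (Fin d → ℝ)).symm (C (e i))
          - (WithLp.equiv 2 (Fin d → ℝ)).symm (A.submatrix (⇑e) id i)
        = (WithLp.equiv 2 (Fin d → ℝ)).symm ((C - A) (e i)) := by
      intro i _
      rw [WithLp.equiv_symm_apply, ← WithLp.toLp_sub]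
      rfl
    rw [Finset.sum_congr rfl hterm]
    -- now sum of equiv.symm equals equiv.symm of mulVec
    have hms : ∑ i ∈ S, (WithLp.equiv 2 (Fin d → ℝ)).symm ((C - A) (e i))
        = (WithLp.equiv 2 (Fin d → ℝ)).symm (∑ i ∈ S, (C - A) (e i)) :=
      (map_sum ((WithLp.linearEquiv 2 ℝ (Fin d → ℝ)).symm) (fun i => (C - A) (e i)) S).symm
    rw [hms]
    congr 1
    funext j'
    have hL : (∑ i ∈ S, (C - A) (e i)) j' = ∑ i ∈ S, (C - A) (e i) j' := by
      rw [Finset.sum_apply]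
    have hR : ((C - A)ᵀ *ᵥ u) j' = ∑ j, (C - A) j j' * u j := rfl
    rw [hL, hR]
    simp only [hu, mul_ite, mul_one, mul_zero]
    rw [Finset.sum_ite_mem, Finset.univ_inter, Finset.sum_map]
  rw [hdiff]
  have hnu : Real.sqrt (∑ j, u j ^ 2) = Real.sqrt S.card := by
    congr 1
    simp only [hu]
    have hsq : ∀ x : Fin n, ((if x ∈ S.map e then (1:ℝ) else 0)) ^ 2
        = if x ∈ S.map e then (1:ℝ) else 0 := by
      intro x; split <;> norm_num
    rw [Finset.sum_congr rfl fun x _ => hsq x, Finset.sum_ite_mem, Finset.univ_inter,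
      Finset.sum_const, Finset.card_map]
    simp
  have hb : ‖(WithLp.equiv 2 (Fin d → ℝ)).symm ((C - A)ᵀ *ᵥ u)‖
      ≤ ‖A - C‖ * Real.sqrt S.card := by
    rw [euclid_norm_eq]
    refine le_trans (mulVec_norm_le _ _) ?_
    rw [opNorm_transpose, hnu, ← norm_neg (C - A), neg_sub]
  rw [norm_smul, Real.norm_eq_abs, abs_of_pos (inv_pos.2 hcard)]
  have h1 : ((S.card : ℝ)⁻¹ * ‖(WithLp.equiv 2 (Fin d → ℝ)).symm ((C - A)ᵀ *ᵥ u)‖) ^ 2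
      ≤ ((S.card : ℝ)⁻¹ * (‖A - C‖ * Real.sqrt S.card)) ^ 2 := by
    apply pow_le_pow_left₀ (by positivity)
    exact mul_le_mul_of_nonneg_left hb (by positivity)
  refine le_trans (mul_le_mul_of_nonneg_left h1 hcard.le) ?_
  rw [mul_pow, mul_pow, Real.sq_sqrt (Nat.cast_nonneg _)]
  rw [show ((S.card:ℝ)) * (((S.card:ℝ))⁻¹ ^ 2 * (‖A - C‖ ^ 2 * (S.card:ℝ)))
      = ‖A - C‖ ^ 2 * (((S.card:ℝ)) * ((S.card:ℝ))⁻¹) ^ 2 by ring]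
  rw [mul_inv_cancel₀ hcard.ne', one_pow, mul_one]

theorem local_data_opNorm_bound {n m d k k' : ℕ} (A C : Matrix (Fin n) (Fin d) ℝ)
    (c : Fin n → Fin k) (e : Fin m ↪ Fin n)
    (Cz : Matrix (Fin m) (Fin d) ℝ)
    (hC : ∀ i, (WithLp.equiv 2 (Fin d → ℝ)).symm (C i) = clMean A (cluster c (c i)))
    (hCz : ∀ i, (WithLp.equiv 2 (Fin d → ℝ)).symm (Cz i)
        = clMean (A.submatrix ⇑e id) (localCluster c e (c (e i))))
    (hk' : (Finset.univ.filter fun r => (localCluster c e r).Nonempty).card ≤ k')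
    (hk1 : 1 ≤ k') :
    opNorm (A.submatrix ⇑e id - Cz) ≤ (1 + Real.sqrt k') * opNorm (A - C) ∧
      (1 + Real.sqrt k') * opNorm (A - C) ≤ 2 * Real.sqrt k' * opNorm (A - C) := by
  classical
  simp only [opNorm_eq_norm]
  constructor
  · -- main bound
    set D : Matrix (Fin m) (Fin d) ℝ := C.submatrix ⇑e id - Cz with hD
    have hsplit : A.submatrix ⇑e id - Cz = (A - C).submatrix ⇑e id + D := by
      rw [hD]
      ext i j
      simp [Matrix.submatrix_apply, Matrix.sub_apply, Matrix.add_apply]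
    -- Frobenius bound on D
    set V : Fin k → EuclideanSpace ℝ (Fin d) := fun r =>
      clMean A (cluster c r) - clMean (A.submatrix ⇑e id) (localCluster c e r) with hV
    have hrow : ∀ i : Fin m, (WithLp.equiv 2 (Fin d → ℝ)).symm (D i) = V (c (e i)) := by
      intro i
      rw [hD, hV]
      have : D i = C (e i) - Cz i := rfl
      rw [show ((C.submatrix ⇑e id - Cz) i) = C (e i) - Cz i from rfl,
        WithLp.equiv_symm_apply, WithLp.toLp_sub, ← WithLp.equiv_symm_apply, hC (e i), hCz i]
    have hfro : ∑ i, ∑ j, D i j ^ 2 ≤ (k' : ℝ) * ‖A - C‖ ^ 2 := by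
      have hrowsum : ∀ i : Fin m, ∑ j, D i j ^ 2 = ‖V (c (e i))‖ ^ 2 := by
        intro i
        rw [← hrow i, euclid_norm_eq, Real.sq_sqrt (by positivity)]
      calc ∑ i, ∑ j, D i j ^ 2 = ∑ i : Fin m, ‖V (c (e i))‖ ^ 2 := by
            exact Finset.sum_congr rfl fun i _ => hrowsum i
        _ = ∑ r : Fin k, ∑ i ∈ Finset.univ.filter (fun i => c (e i) = r), ‖V (c (e i))‖ ^ 2 := by
            rw [Finset.sum_fiberwise]
        _ = ∑ r : Fin k, ((localCluster c e r).card : ℝ) * ‖V r‖ ^ 2 := by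
            refine Finset.sum_congr rfl fun r _ => ?_
            rw [Finset.sum_congr rfl (fun i hi => by
              rw [show c (e i) = r from by simpa using hi]), Finset.sum_const,
              nsmul_eq_mul]
            rfl
        _ ≤ ∑ r ∈ Finset.univ.filter (fun r => (localCluster c e r).Nonempty),
              ‖A - C‖ ^ 2 := by
            rw [Finset.sum_filter]
            refine Finset.sum_le_sum fun r _ => ?_
            by_cases hne : (localCluster c e r).Nonempty
            · simp only [hne, if_true]
              exact mean_diff_bound A C c e r hC hne
            · simp only [hne, if_false]
              rw [Finset.not_nonempty_iff_eq_empty.1 hne]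
              simp
        _ ≤ (k' : ℝ) * ‖A - C‖ ^ 2 := by
            rw [Finset.sum_const, nsmul_eq_mul]
            exact mul_le_mul_of_nonneg_right (by exact_mod_cast hk') (by positivity)
    have hDnorm : ‖D‖ ≤ Real.sqrt k' * ‖A - C‖ := by
      refine le_trans (opNorm_le_frobenius D) ?_
      refine le_trans (Real.sqrt_le_sqrt hfro) ?_
      rw [Real.sqrt_mul (Nat.cast_nonneg _), Real.sqrt_sq (norm_nonneg _)]
    calc ‖A.submatrix ⇑e id - Cz‖ ≤ ‖(A - C).submatrix ⇑e id‖ + ‖D‖ := by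
          rw [hsplit]; exact norm_add_le _ _
      _ ≤ ‖A - C‖ + Real.sqrt k' * ‖A - C‖ :=
          add_le_add (opNorm_submatrix_le _ e) hDnorm
      _ = (1 + Real.sqrt k') * ‖A - C‖ := by ring
  · have h1 : (1 : ℝ) ≤ Real.sqrt k' := by
      rw [show (1:ℝ) = Real.sqrt 1 by simp]
      exact Real.sqrt_le_sqrt (by exact_mod_cast hk1)
    have : (1 + Real.sqrt k') ≤ 2 * Real.sqrt k' := by linarith
    exact mul_le_mul_of_nonneg_right this (norm_nonneg _)
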